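/- Let n ≥ 1, let σ be a permutation of Fin n, and let ε > 0. Then there exists a positive probability vector p on Fin n such that Σ_{(i,j), i ≠ j} (f_σ(i,j) − f_p(i,j))² < ε, where the sum ranges over all ordered pairs of distinct elements of Fin n. -/

import Mathlib

/-- **Lemma 1 (almost-tournaments).** For any ranking `σ` of `Fin n` (`n ≥ 1`) and any
`ε > 0` there is a positive probability vector `p` on `Fin n` whose pairwise opinions
`p i / (p i + p j)` are within squared Euclidean distance `ε` of the ranking indicators
of `σ`, summed over all ordered pairs of distinct elements. -/
theorem ranking_approx_by_expert (n : ℕ) (hn : 1 ≤ n) (σ : Equiv.Perm (Fin n))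
    (ε : ℝ) (hε : 0 < ε) :
    ∃ p : Fin n → ℝ, (∀ i, 0 < p i) ∧ (∑ i, p i = 1) ∧
      ∑ i : Fin n, ∑ j ∈ Finset.univ \ {i},
        ((if σ⁻¹ i < σ⁻¹ j then (1 : ℝ) else 0) - p i / (p i + p j)) ^ 2 < ε := by
  set δ : ℝ := min 1 (Real.sqrt ε / (n + 1)) with hδdef
  have hδ0 : 0 < δ := by
    apply lt_min one_pos
    positivity
  have hδ1 : δ ≤ 1 := min_le_left _ _
  have hδsq : δ ≤ Real.sqrt ε / (n + 1) := min_le_right _ _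
  set q : Fin n → ℝ := fun i => δ ^ ((σ⁻¹ i : Fin n) : ℕ) with hq
  have hq0 : ∀ i, 0 < q i := fun i => pow_pos hδ0 _
  set S : ℝ := ∑ i, q i with hS
  have hS0 : 0 < S := Finset.sum_pos (fun i _ => hq0 i) ⟨⟨0, hn⟩, Finset.mem_univ _⟩
  refine ⟨fun i => q i / S, fun i => div_pos (hq0 i) hS0, ?_, ?_⟩
  · rw [← Finset.sum_div, ← hS, div_self hS0.ne']
  -- ratios simplify
  have hratio : ∀ i j, q i / S / (q i / S + q j / S) = q i / (q i + q j) := by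
    intro i j
    have h1 : q i + q j ≠ 0 := by positivity
    field_simp
  have key : ∀ i j : Fin n, j ≠ i →
      ((if σ⁻¹ i < σ⁻¹ j then (1 : ℝ) else 0) - q i / S / (q i / S + q j / S)) ^ 2 ≤ δ ^ 2 := by
    intro i j hij
    rw [hratio]
    have hsum0 : (0 : ℝ) < q i + q j := by positivity
    by_cases h : σ⁻¹ i < σ⁻¹ j
    · rw [if_pos h]
      have h1 : (1 : ℝ) - q i / (q i + q j) = q j / (q i + q j) := by
        field_simp
        ring
      rw [h1]
      have hle : q j ≤ δ * (q i + q j) := by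
        have hkk : ((σ⁻¹ i : Fin n) : ℕ) + 1 ≤ ((σ⁻¹ j : Fin n) : ℕ) := h
        have : q j ≤ δ * q i := by
          have := pow_le_pow_of_le_one hδ0.le hδ1 hkk
          calc q j = δ ^ ((σ⁻¹ j : Fin n) : ℕ) := rfl
            _ ≤ δ ^ (((σ⁻¹ i : Fin n) : ℕ) + 1) := pow_le_pow_of_le_one hδ0.le hδ1 hkk
            _ = δ * q i := by rw [pow_succ]; ring
        nlinarith [hq0 j, hδ0]
      have hd : q j / (q i + q j) ≤ δ := (div_le_iff₀ hsum0).mpr hle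
      have hd0 : 0 ≤ q j / (q i + q j) := by positivity
      nlinarith
    · rw [if_neg h]
      have h' : σ⁻¹ j < σ⁻¹ i := by
        rcases lt_or_eq_of_le (not_lt.mp h) with h' | h'
        · exact h'
        · exact absurd (σ⁻¹.injective h'.symm) (by simpa using hij.symm)
      have hle : q i ≤ δ * (q i + q j) := by
        have hkk : ((σ⁻¹ j : Fin n) : ℕ) + 1 ≤ ((σ⁻¹ i : Fin n) : ℕ) := h'
        have : q i ≤ δ * q j := by
          calc q i = δ ^ ((σ⁻¹ i : Fin n) : ℕ) := rfl
            _ ≤ δ ^ (((σ⁻¹ j : Fin n) : ℕ) + 1) := pow_le_pow_of_le_one hδ0.le hδ1 hkk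
            _ = δ * q j := by rw [pow_succ]; ring
        nlinarith [hq0 i, hδ0]
      have hd : q i / (q i + q j) ≤ δ := (div_le_iff₀ hsum0).mpr hle
      have hd0 : 0 ≤ q i / (q i + q j) := by positivity
      nlinarith
  calc ∑ i : Fin n, ∑ j ∈ Finset.univ \ {i},
        ((if σ⁻¹ i < σ⁻¹ j then (1 : ℝ) else 0) - q i / S / (q i / S + q j / S)) ^ 2
      ≤ ∑ i : Fin n, ∑ _j ∈ Finset.univ \ {i}, δ ^ 2 := by
        apply Finset.sum_le_sum
        intro i _
        apply Finset.sum_le_sum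
        intro j hj
        have hji : j ≠ i := by
          simp [Finset.mem_sdiff] at hj
          exact hj
        exact key i j hji
    _ ≤ ∑ _i : Fin n, ∑ _j : Fin n, δ ^ 2 := by
        apply Finset.sum_le_sum
        intro i _
        apply Finset.sum_le_sum_of_subset_of_nonneg (Finset.sdiff_subset)
        intro j _ _
        positivity
    _ = (n : ℝ) * ((n : ℝ) * δ ^ 2) := by simp [mul_assoc]
    _ < ε := by
        have hsq : Real.sqrt ε ^ 2 = ε := Real.sq_sqrt hε.le
        have hn1 : (0 : ℝ) < (n : ℝ) + 1 := by positivity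
        have hδ2 : δ ^ 2 ≤ (Real.sqrt ε / (n + 1)) ^ 2 := by
          apply pow_le_pow_left₀ hδ0.le hδsq
        have h2 : (Real.sqrt ε / (n + 1)) ^ 2 = ε / ((n : ℝ) + 1) ^ 2 := by
          rw [div_pow, hsq]
        have hδ3 : δ ^ 2 * ((n : ℝ) + 1) ^ 2 ≤ ε := by
          have h3 := hδ2.trans_eq h2
          rw [le_div_iff₀ (by positivity)] at h3
          exact h3
        have hδp : 0 < δ ^ 2 := by positivity
        nlinarith [hδ3, hδp, hε]
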